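/- If a signal u ∈ L²[0,∞) has Laguerre spectrum {u_j} and y(t) = u(t - τ) (extended by zero for t < τ) for a delay τ ≥ 0, then the Laguerre spectrum of y satisfies y_j = Σ_{k=0}^{j} h_{j-k}(κ) u_k for all j, where h_k(κ) = e^{-κ/2} L_k(κ), κ = 2pτ, and L_k is the associated Laguerre polynomial with parameter α = -1. -/

import Mathlib

open MeasureTheory

/-- Associated Laguerre polynomial with parameter `α = -1`. -/
noncomputable def assocLaguerre (m : ℕ) (ξ : ℝ) : ℝ :=
  ∑ n ∈ Finset.range (m + 1),
    (1 / (n.factorial : ℝ)) * ((m - 1).choose (m - n) : ℝ) * (-ξ) ^ n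

/-- The `k`-th continuous-time Laguerre function `ℓ_k(t) = √(2p) e^{-pt} L_k^{(0)}(2pt)`. -/
noncomputable def laguerreFun (p : ℝ) (k : ℕ) (t : ℝ) : ℝ :=
  Real.sqrt (2 * p) * Real.exp (-p * t) *
    ∑ n ∈ Finset.range (k + 1), (k.choose n : ℝ) * (-(2 * p * t)) ^ n / (n.factorial : ℝ)

/-- The continuous Laguerre spectrum of a signal on `[0,∞)`. -/
noncomputable def laguerreSpec (p : ℝ) (f : ℝ → ℝ) (j : ℕ) : ℝ :=
  ∫ t in Set.Ioi (0 : ℝ), f t * laguerreFun p j t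

/-- Laguerre-domain Markov parameters of the delay operator: `h_k(κ) = e^{-κ/2} L_k(κ)`. -/
noncomputable def markovH (κ : ℝ) (k : ℕ) : ℝ :=
  Real.exp (-κ / 2) * assocLaguerre k κ

open Finset

/-- Vandermonde convolution in the upper indices. -/
lemma vand_upper (m : ℕ) : ∀ a c : ℕ,
    ∑ k ∈ range (m + 1), k.choose a * (m - k).choose c = (m + 1).choose (a + c + 1) := by
  induction m with
  | zero =>
    intro a c
    simp only [range_one, sum_singleton, Nat.zero_sub, Nat.choose]
    rcases a with _ | a <;> rcases c with _ | c <;> simp [Nat.choose]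
  | succ m ih =>
    intro a c
    rcases c with _ | c
    · -- c = 0 : hockey stick
      simp only [Nat.choose_zero_right, mul_one]
      rw [← Nat.sum_Icc_choose (m + 1) a]
      apply (Finset.sum_subset ?_ ?_).symm
      · intro x hx
        simp only [mem_Icc] at hx
        simp only [mem_range]
        omega
      · intro x hx hx'
        simp only [mem_Icc, mem_range] at hx hx'
        exact Nat.choose_eq_zero_of_lt (by omega)
    · rw [Finset.sum_range_succ]
      have hstep : ∑ k ∈ range (m + 1), k.choose a * (m + 1 - k).choose (c + 1)
          = ∑ k ∈ range (m + 1), (k.choose a * (m - k).choose c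
              + k.choose a * (m - k).choose (c + 1)) := by
        apply Finset.sum_congr rfl
        intro k hk
        simp only [mem_range] at hk
        have h1 : m + 1 - k = (m - k) + 1 := by omega
        rw [h1, Nat.choose_succ_succ, Nat.mul_add]
      rw [hstep, Finset.sum_add_distrib, ih a c, ih a (c + 1)]
      have he : (m + 1 - (m + 1)) = 0 := by omega
      rw [he]
      rw [Nat.choose_eq_zero_of_lt (by omega : (0:ℕ) < c + 1)]
      have : a + (c + 1) + 1 = (a + c + 1) + 1 := by omega
      rw [this, Nat.choose_succ_succ (m + 1) (a + c + 1)]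
      ring

noncomputable def Qc (m b : ℕ) : ℝ :=
  if b ≤ m then ((m - 1).choose (m - b) : ℝ) / (b.factorial : ℝ) else 0

lemma key (j a b : ℕ) :
    ∑ k ∈ range (j + 1), Qc (j - k) b * (k.choose a : ℝ)
      = (j.choose (a + b) : ℝ) / (b.factorial : ℝ) := by
  rcases b with _ | b
  · -- b = 0
    have h : ∀ k ∈ range (j + 1), Qc (j - k) 0 * (k.choose a : ℝ)
        = if k = j then (k.choose a : ℝ) else 0 := by
      intro k hk
      simp only [mem_range] at hk
      rcases eq_or_ne k j with rfl | hne
      · simp [Qc]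
      · have h1 : 1 ≤ j - k := by omega
        simp only [Qc, if_pos (Nat.zero_le _), Nat.sub_zero]
        rw [Nat.choose_eq_zero_of_lt (by omega : j - k - 1 < j - k)]
        simp [hne]
    rw [Finset.sum_congr rfl h, Finset.sum_ite_eq' (range (j+1)) j]
    simp
  · -- b = b' + 1
    rw [Finset.sum_range_succ]
    have hlast : Qc (j - j) (b + 1) * (j.choose a : ℝ) = 0 := by
      simp [Qc]
    rw [hlast, add_zero]
    have h : ∀ k ∈ range j, Qc (j - k) (b + 1) * (k.choose a : ℝ)
        = (((k.choose a) * (j - 1 - k).choose b : ℕ) : ℝ) / ((b+1).factorial : ℝ) := by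
      intro k hk
      simp only [mem_range] at hk
      by_cases hbk : b + 1 ≤ j - k
      · simp only [Qc, if_pos hbk]
        have h1 : j - k - (b + 1) = (j - k - 1) - b := by omega
        have h2 : b ≤ j - k - 1 := by omega
        rw [h1, Nat.choose_symm h2]
        have h3 : j - k - 1 = j - 1 - k := by omega
        rw [h3]
        push_cast
        ring
      · simp only [Qc, if_neg hbk]
        rw [Nat.choose_eq_zero_of_lt (by omega : j - 1 - k < b)]
        simp
    rw [Finset.sum_congr rfl h, ← Finset.sum_div, ← Nat.cast_sum]
    rcases j with _ | m
    · rw [Nat.choose_eq_zero_of_lt (by omega : (0:ℕ) < a + (b+1))]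
      simp
    · have := vand_upper m a b
      have hr : ∑ k ∈ range (m + 1), k.choose a * (m + 1 - 1 - k).choose b
          = (m + 1).choose (a + b + 1) := by
        simpa using this
      rw [hr]
      norm_num [Nat.add_assoc]

noncomputable def fc (j a b : ℕ) (x y : ℝ) : ℝ :=
  (j.choose (a + b) : ℝ) / ((a.factorial : ℝ) * (b.factorial : ℝ)) * ((-x) ^ a * (-y) ^ b)


lemma laguerre_add (j : ℕ) (x y : ℝ) :
    ∑ n ∈ range (j + 1), (j.choose n : ℝ) * (-(x + y)) ^ n / (n.factorial : ℝ)
      = ∑ k ∈ range (j + 1), assocLaguerre (j - k) y *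
          ∑ n ∈ range (k + 1), (k.choose n : ℝ) * (-x) ^ n / (n.factorial : ℝ) := by
  have hT : ∀ T : ℝ, T = T := fun _ => rfl
  -- Step B : LHS = double sum of fc
  have hB : ∑ n ∈ range (j + 1), (j.choose n : ℝ) * (-(x + y)) ^ n / (n.factorial : ℝ)
      = ∑ b ∈ range (j + 1), ∑ a ∈ range (j + 1), fc j a b x y := by
    rw [Finset.sum_comm]
    symm
    have step1 : ∀ a ∈ range (j + 1),
        ∑ b ∈ range (j + 1), fc j a b x y
          = ∑ n ∈ range (j + 1), (if a ≤ n then fc j a (n - a) x y else 0) := by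
      intro a ha
      simp only [mem_range] at ha
      have e1 : ∑ b ∈ range (j + 1), fc j a b x y
          = ∑ b ∈ range (j + 1 - a), fc j a b x y := by
        symm
        apply Finset.sum_subset (Finset.range_subset_range.mpr (by omega))
        intro b hb hb'
        simp only [mem_range] at hb hb'
        have : j < a + b := by omega
        simp [fc, Nat.choose_eq_zero_of_lt this]
      have e2 : ∑ n ∈ Finset.Ico a (j + 1), fc j a (n - a) x y
          = ∑ b ∈ range (j + 1 - a), fc j a b x y := by
        rw [Finset.sum_Ico_eq_sum_range]
        apply Finset.sum_congr rfl
        intro b _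
        congr 1
        omega
      have e3 : ∑ n ∈ range (j + 1), (if a ≤ n then fc j a (n - a) x y else 0)
          = ∑ n ∈ Finset.Ico a (j + 1), (if a ≤ n then fc j a (n - a) x y else 0) := by
        symm
        apply Finset.sum_subset
        · intro n hn; simp only [Finset.mem_Ico, mem_range] at hn ⊢; omega
        · intro n hn hn'
          simp only [mem_range, Finset.mem_Ico] at hn hn'
          rw [if_neg (by omega)]
      rw [e1, ← e2, e3]
      apply Finset.sum_congr rfl
      intro n hn
      simp only [Finset.mem_Ico] at hn
      rw [if_pos hn.1]
    rw [Finset.sum_congr rfl step1, Finset.sum_comm]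
    apply Finset.sum_congr rfl
    intro n hn
    simp only [mem_range] at hn
    have step2 : ∑ a ∈ range (j + 1), (if a ≤ n then fc j a (n - a) x y else 0)
        = ∑ a ∈ range (n + 1), fc j a (n - a) x y := by
      symm
      rw [show ∑ a ∈ range (n+1), fc j a (n-a) x y
          = ∑ a ∈ range (n+1), (if a ≤ n then fc j a (n - a) x y else 0) from
        Finset.sum_congr rfl (fun a ha => by
          simp only [mem_range] at ha; rw [if_pos (by omega)])]
      apply Finset.sum_subset (Finset.range_subset_range.mpr (by omega))
      intro a ha ha'
      simp only [mem_range] at ha ha'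
      rw [if_neg (by omega)]
    rw [step2]
    -- step3
    have hxy : -(x + y) = (-x) + (-y) := by ring
    rw [hxy, add_pow, Finset.mul_sum, Finset.sum_div]
    apply Finset.sum_congr rfl
    intro a ha
    simp only [mem_range] at ha
    have haa : a ≤ n := by omega
    have hfact : ((n.choose a : ℕ) : ℝ) * (a.factorial : ℝ) * ((n - a).factorial : ℝ)
        = (n.factorial : ℝ) := by
      exact_mod_cast congrArg (Nat.cast : ℕ → ℝ) (Nat.choose_mul_factorial_mul_factorial haa)
    have h1 : (a.factorial : ℝ) ≠ 0 := Nat.cast_ne_zero.mpr a.factorial_ne_zero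
    have h2 : ((n - a).factorial : ℝ) ≠ 0 := Nat.cast_ne_zero.mpr (n - a).factorial_ne_zero
    have h3 : (n.factorial : ℝ) ≠ 0 := Nat.cast_ne_zero.mpr n.factorial_ne_zero
    have key2 : (n.choose a : ℝ)
        = (n.factorial : ℝ) / ((a.factorial : ℝ) * ((n - a).factorial : ℝ)) := by
      rw [eq_div_iff (by positivity)]
      linear_combination hfact
    rw [fc, show a + (n - a) = n by omega, key2]
    field_simp
  -- Step A : RHS = double sum of fc
  have hA : ∑ k ∈ range (j + 1), assocLaguerre (j - k) y *
        ∑ n ∈ range (k + 1), (k.choose n : ℝ) * (-x) ^ n / (n.factorial : ℝ)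
      = ∑ b ∈ range (j + 1), ∑ a ∈ range (j + 1), fc j a b x y := by
    have hQ : ∀ k ∈ range (j + 1), assocLaguerre (j - k) y
        = ∑ b ∈ range (j + 1), Qc (j - k) b * (-y) ^ b := by
      intro k hk
      simp only [mem_range] at hk
      rw [assocLaguerre]
      have e : ∑ n ∈ range (j - k + 1),
            (1 / (n.factorial : ℝ)) * (((j - k) - 1).choose ((j - k) - n) : ℝ) * (-y) ^ n
          = ∑ b ∈ range (j - k + 1), Qc (j - k) b * (-y) ^ b := by
        apply Finset.sum_congr rfl
        intro b hb
        simp only [mem_range] at hb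
        rw [Qc, if_pos (by omega)]
        ring
      rw [e]
      apply Finset.sum_subset (Finset.range_subset_range.mpr (by omega))
      intro b hb hb'
      simp only [mem_range] at hb hb'
      rw [Qc, if_neg (by omega)]
      ring
    have hP : ∀ k ∈ range (j + 1),
        ∑ n ∈ range (k + 1), (k.choose n : ℝ) * (-x) ^ n / (n.factorial : ℝ)
          = ∑ a ∈ range (j + 1), (k.choose a : ℝ) * (-x) ^ a / (a.factorial : ℝ) := by
      intro k hk
      simp only [mem_range] at hk
      apply Finset.sum_subset (Finset.range_subset_range.mpr (by omega))
      intro a ha ha'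
      simp only [mem_range] at ha ha'
      rw [Nat.choose_eq_zero_of_lt (by omega)]
      simp
    calc ∑ k ∈ range (j + 1), assocLaguerre (j - k) y *
          ∑ n ∈ range (k + 1), (k.choose n : ℝ) * (-x) ^ n / (n.factorial : ℝ)
        = ∑ k ∈ range (j + 1), ∑ b ∈ range (j + 1), ∑ a ∈ range (j + 1),
            (Qc (j - k) b * (-y) ^ b) * ((k.choose a : ℝ) * (-x) ^ a / (a.factorial : ℝ)) := by
          apply Finset.sum_congr rfl
          intro k hk
          rw [hQ k hk, hP k hk, Finset.sum_mul_sum]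
      _ = ∑ b ∈ range (j + 1), ∑ a ∈ range (j + 1), ∑ k ∈ range (j + 1),
            (Qc (j - k) b * (k.choose a : ℝ)) * ((-y) ^ b * (-x) ^ a / (a.factorial : ℝ)) := by
          rw [Finset.sum_comm]
          apply Finset.sum_congr rfl
          intro b _
          rw [Finset.sum_comm]
          apply Finset.sum_congr rfl
          intro a _
          apply Finset.sum_congr rfl
          intro k _
          ring
      _ = ∑ b ∈ range (j + 1), ∑ a ∈ range (j + 1), fc j a b x y := by
          apply Finset.sum_congr rfl
          intro b _
          apply Finset.sum_congr rfl
          intro a _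
          rw [← Finset.sum_mul, key j a b, fc]
          field_simp
  rw [hA, hB]

/-- the shift identity for Laguerre functions -/
lemma laguerreFun_shift (p τ : ℝ) (j : ℕ) (s : ℝ) :
    laguerreFun p j (s + τ)
      = ∑ k ∈ range (j + 1), markovH (2 * p * τ) (j - k) * laguerreFun p k s := by
  simp only [laguerreFun, markovH]
  rw [show 2 * p * (s + τ) = 2 * p * s + 2 * p * τ from by ring,
    show -p * (s + τ) = -p * s + -p * τ from by ring, Real.exp_add,
    laguerre_add j (2 * p * s) (2 * p * τ),
    show -(2 * p * τ) / 2 = -p * τ from by ring, Finset.mul_sum]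
  apply Finset.sum_congr rfl
  intro k _
  ring

lemma memL2_pow_exp (p : ℝ) (hp : 0 < p) (n : ℕ) :
    MemLp (fun t : ℝ => t ^ n * Real.exp (-p * t)) 2 (volume.restrict (Set.Ioi 0)) := by
  have hc : Continuous fun t : ℝ => t ^ n * Real.exp (-p * t) := by fun_prop
  rw [memLp_two_iff_integrable_sq hc.aestronglyMeasurable]
  have h0 : IntegrableOn (fun x : ℝ => x ^ ((2 * n : ℕ) : ℝ) * Real.exp (-(2 * p) * x ^ (1:ℝ)))
      (Set.Ioi 0) := by
    apply integrableOn_rpow_mul_exp_neg_mul_rpow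
    · exact lt_of_lt_of_le (by norm_num) (Nat.cast_nonneg _)
    · norm_num
    · linarith
  apply (h0.congr_fun ?_ measurableSet_Ioi)
  intro x hx
  simp only [Set.mem_Ioi] at hx
  simp only [Real.rpow_natCast, Real.rpow_one]
  rw [mul_pow]
  congr 1
  · rw [show 2 * n = n * 2 from Nat.mul_comm 2 n, pow_mul]
  · rw [pow_two, ← Real.exp_add]
    congr 1
    ring

lemma laguerreFun_eq_sum (p : ℝ) (k : ℕ) :
    laguerreFun p k = fun t =>
      ∑ n ∈ range (k + 1),
        (Real.sqrt (2 * p) * (k.choose n : ℝ) * (-(2 * p)) ^ n / (n.factorial : ℝ)) *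
          (t ^ n * Real.exp (-p * t)) := by
  funext t
  rw [laguerreFun, Finset.mul_sum]
  apply Finset.sum_congr rfl
  intro n _
  rw [show -(2 * p * t) = (-(2 * p)) * t from by ring, mul_pow]
  ring

lemma memL2_laguerreFun (p : ℝ) (hp : 0 < p) (k : ℕ) :
    MemLp (laguerreFun p k) 2 (volume.restrict (Set.Ioi 0)) := by
  rw [laguerreFun_eq_sum]
  apply memLp_finset_sum
  intro n _
  exact (memL2_pow_exp p hp n).const_mul _

lemma integrable_mul_L2 {u v : ℝ → ℝ} {μ : Measure ℝ}
    (hu : MemLp u 2 μ) (hv : MemLp v 2 μ) : Integrable (fun t => u t * v t) μ := by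
  have h := hv.smul (φ := u) hu (p := 2) (q := 2) (r := 1)
  rw [← memLp_one_iff_integrable]
  exact h

theorem delayed_laguerre_spectrum (p τ : ℝ) (hp : 0 < p) (hτ : 0 ≤ τ)
    (u y : ℝ → ℝ)
    (hu : MeasureTheory.MemLp u 2 (volume.restrict (Set.Ioi (0 : ℝ))))
    (hy : ∀ t, y t = if τ ≤ t then u (t - τ) else 0) (j : ℕ) :
    laguerreSpec p y j
      = ∑ k ∈ Finset.range (j + 1), markovH (2 * p * τ) (j - k) * laguerreSpec p u k := by
  set g : ℝ → ℝ := fun t => u (t - τ) * laguerreFun p j t with hg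
  calc laguerreSpec p y j
      = ∫ t in Set.Ioi (0:ℝ), Set.indicator (Set.Ici τ) g t := by
        rw [laguerreSpec]
        refine integral_congr_ae (Filter.Eventually.of_forall fun t => ?_)
        by_cases h : τ ≤ t <;>
          simp [Set.indicator_apply, Set.mem_Ici, h, hy, hg]
    _ = ∫ t in Set.Ici τ ∩ Set.Ioi 0, g t := by
        rw [integral_indicator measurableSet_Ici, Measure.restrict_restrict measurableSet_Ici]
    _ = ∫ t in Set.Ioi τ, g t := by
        apply setIntegral_congr_set
        rw [MeasureTheory.ae_eq_set]
        constructor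
        · refine measure_mono_null ?_ (measure_singleton τ)
          intro t ht
          simp only [Set.mem_diff, Set.mem_inter_iff, Set.mem_Ici, Set.mem_Ioi,
            Set.mem_singleton_iff] at ht ⊢
          rcases ht with ⟨⟨h1, _⟩, h3⟩
          exact le_antisymm (not_lt.mp h3) h1
        · refine measure_mono_null ?_ measure_empty
          intro t ht
          simp only [Set.mem_diff, Set.mem_inter_iff, Set.mem_Ici, Set.mem_Ioi] at ht
          exfalso
          rcases ht with ⟨h1, h2⟩
          exact h2 ⟨le_of_lt h1, by linarith⟩
    _ = ∫ s in Set.Ioi (0:ℝ), g (s + τ) := by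
        rw [← integral_indicator measurableSet_Ioi, ← integral_indicator measurableSet_Ioi,
          ← integral_add_right_eq_self (Set.indicator (Set.Ioi τ) g) τ]
        congr 1
        funext s
        by_cases h : (0:ℝ) < s
        · rw [Set.indicator_of_mem (by simpa using h), Set.indicator_of_mem
            (by simp only [Set.mem_Ioi]; linarith)]
        · rw [Set.indicator_of_notMem (by simpa using h), Set.indicator_of_notMem
            (by simp only [Set.mem_Ioi]; push_neg at h ⊢; linarith)]
    _ = ∫ s in Set.Ioi (0:ℝ),
          ∑ k ∈ range (j + 1), markovH (2 * p * τ) (j - k) * (u s * laguerreFun p k s) := by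
        refine integral_congr_ae (Filter.Eventually.of_forall fun s => ?_)
        simp only [hg, add_sub_cancel_right, laguerreFun_shift p τ j s, Finset.mul_sum]
        apply Finset.sum_congr rfl
        intro k _
        ring
    _ = ∑ k ∈ range (j + 1), markovH (2 * p * τ) (j - k) * laguerreSpec p u k := by
        rw [integral_finset_sum]
        · apply Finset.sum_congr rfl
          intro k _
          rw [integral_const_mul, laguerreSpec]
        · intro k _
          exact (integrable_mul_L2 hu (memL2_laguerreFun p hp k)).const_mul _
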